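/- Let n, k ≥ 1 be integers, θ ∈ (0,1), M > 0, and let β : ℝ^k → ℝ^k be θ-Hölder continuous with constant M, i.e. |β(w) − β(v)| ≤ M|w−v|^θ for all w, v ∈ ℝ^k. Let Ω ⊆ ℝⁿ be open, let Ω' be an open set whose closure is a compact subset of Ω, and set δ = dist(Ω', ∂Ω) > 0. Let V : Ω → ℝ^k be C¹ with ∫_Ω ‖DV‖² dx ≤ K² for some K > 0, where ‖DV‖ denotes the Hilbert–Schmidt norm of the derivative. Then there is a constant C depending only on n such that for every vector v ∈ ℝⁿ with 0 < |v| ≤ δ, ∫_{Ω'} |β(V(x+v)) − β(V(x))|^{2/θ} dx ≤ C · M^{2/θ} K² |v|². -/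

import Mathlib

open Real MeasureTheory
open scoped ENNReal

/-- Cauchy–Schwarz for the lower integral on a measure of total mass one. -/
private lemma sq_lintegral_le {α : Type*} [MeasurableSpace α] (μ : Measure α)
    (hμ : μ Set.univ = 1) (F : α → ℝ≥0∞) (hF : AEMeasurable F μ) :
    (∫⁻ a, F a ∂μ) ^ 2 ≤ ∫⁻ a, (F a) ^ 2 ∂μ := by
  have hconj : Real.HolderConjugate 2 2 := Real.HolderConjugate.two_two
  have h := ENNReal.lintegral_mul_le_Lp_mul_Lq μ hconj hF aemeasurable_const (g := fun _ => 1)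
  simp only [mul_one, ENNReal.one_rpow, lintegral_const, hμ, one_mul, mul_one] at h
  have h2 : ∫⁻ a, F a ∂μ ≤ (∫⁻ a, F a ^ (2:ℝ) ∂μ) ^ ((1:ℝ)/2) := by
    simpa using h
  calc (∫⁻ a, F a ∂μ) ^ 2 ≤ ((∫⁻ a, F a ^ (2:ℝ) ∂μ) ^ ((1:ℝ)/2)) ^ 2 :=
        pow_le_pow_left' h2 2
    _ = ∫⁻ a, F a ^ (2:ℝ) ∂μ := by
        rw [← ENNReal.rpow_natCast _ 2, ← ENNReal.rpow_mul]
        norm_num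
    _ = ∫⁻ a, (F a) ^ 2 ∂μ := by
        simp_rw [← ENNReal.rpow_natCast]
        norm_num

/-- Hilbert–Schmidt bound for the operator norm applied to a vector. -/
private lemma hs_bound {n k : ℕ} (L : EuclideanSpace ℝ (Fin n) →L[ℝ] EuclideanSpace ℝ (Fin k))
    (w : EuclideanSpace ℝ (Fin n)) :
    ‖L w‖ ≤ ‖w‖ * Real.sqrt (∑ i, ‖L (EuclideanSpace.single i 1)‖ ^ 2) := by
  have hw : w = ∑ i, w i • EuclideanSpace.single i (1:ℝ) := by
    refine ((PiLp.basisFun 2 ℝ (Fin n)).sum_repr w).symm.trans ?_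
    simp [PiLp.basisFun_repr, PiLp.basisFun_apply]
  calc ‖L w‖ = ‖∑ i, w i • L (EuclideanSpace.single i (1:ℝ))‖ := by
        conv_lhs => rw [hw]
        simp [map_sum]
    _ ≤ ∑ i, |w i| * ‖L (EuclideanSpace.single i (1:ℝ))‖ := by
        refine (norm_sum_le _ _).trans_eq ?_
        simp [norm_smul]
    _ ≤ Real.sqrt (∑ i, |w i| ^ 2) * Real.sqrt (∑ i, ‖L (EuclideanSpace.single i 1)‖ ^ 2) :=
        Real.sum_mul_le_sqrt_mul_sqrt _ _ _
    _ = ‖w‖ * Real.sqrt (∑ i, ‖L (EuclideanSpace.single i 1)‖ ^ 2) := by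
        rw [EuclideanSpace.norm_eq]
        simp [Real.norm_eq_abs]

/-- If `‖u‖ ≤ δ := dist(Ω', ∂Ω)`, then `Ω' + u ⊆ Ω`. -/
private lemma geom_lemma {n : ℕ} {Ω Ω' : Set (EuclideanSpace ℝ (Fin n))} (hΩ : IsOpen Ω)
    (hΩ' : IsOpen Ω') (hsub : Ω' ⊆ Ω) {δ : ℝ} (hδpos : 0 < δ)
    (hlow : ∀ x ∈ Ω', ∀ y ∈ frontier Ω, δ ≤ dist x y)
    {x : EuclideanSpace ℝ (Fin n)} (hx : x ∈ Ω') {u : EuclideanSpace ℝ (Fin n)}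
    (hu : ‖u‖ ≤ δ) : x + u ∈ Ω := by
  by_contra hxu
  have hseg : IsPreconnected (segment ℝ x (x + u)) := (convex_segment _ _).isPreconnected
  have hy : ∃ y ∈ segment ℝ x (x + u), y ∈ frontier Ω := by
    by_contra hno
    push_neg at hno
    have hcover : segment ℝ x (x + u) ⊆ Ω ∪ (closure Ω)ᶜ := by
      intro y hy
      rcases (em (y ∈ closure Ω)) with h | h
      · rcases (em (y ∈ Ω)) with h2 | h2
        · exact Or.inl h2
        · exact absurd ⟨h, by rwa [hΩ.interior_eq]⟩ (hno y hy)
      · exact Or.inr h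
    rcases hseg.subset_or_subset (u := Ω) (v := (closure Ω)ᶜ) hΩ
        isClosed_closure.isOpen_compl
        (disjoint_compl_right.mono_left subset_closure) hcover with h | h
    · exact hxu (h (right_mem_segment _ _ _))
    · exact (h (left_mem_segment _ _ _)) (subset_closure (hsub hx))
  obtain ⟨y, hyseg, hyfr⟩ := hy
  rw [segment_eq_image'] at hyseg
  obtain ⟨t, ht, rfl⟩ := hyseg
  simp only [add_sub_cancel_left] at hyfr
  have hd : dist x (x + t • u) = t * ‖u‖ := by
    rw [dist_eq_norm]
    simp [norm_smul, abs_of_nonneg ht.1]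
  have h1 : δ ≤ t * ‖u‖ := hd ▸ hlow x hx _ hyfr
  have hupos : 0 < ‖u‖ := by nlinarith [ht.2, norm_nonneg u, ht.1]
  have ht1 : t = 1 := by nlinarith [ht.2, ht.1]
  have huδ : ‖u‖ = δ := by nlinarith [ht.2]
  subst ht1
  rw [one_smul] at hyfr
  obtain ⟨r, hr, hball⟩ := Metric.isOpen_iff.1 hΩ' x hx
  set ε : ℝ := min (r / 2) δ / (2 * δ) with hε
  have hεpos : 0 < ε := by positivity
  have hεδ : ε * δ ≤ min (r/2) δ / 2 := by
    rw [hε]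
    rw [div_mul_eq_mul_div]
    rw [div_le_div_iff₀ (by positivity) (by norm_num)]
    ring_nf
    nlinarith [min_le_right (r/2) δ, lt_min hr hδpos, min_le_left (r/2) δ]
  have hε1 : ε < 1 := by
    have h2 : min (r/2) δ ≤ δ := min_le_right _ _
    rw [hε, div_lt_one (by positivity)]
    linarith
  have hx' : x + ε • u ∈ Ω' := by
    apply hball
    rw [Metric.mem_ball, dist_self_add_left, norm_smul, Real.norm_eq_abs,
      abs_of_pos hεpos, huδ]
    have := min_le_left (r/2) δ
    linarith
  have hcontr := hlow _ hx' _ hyfr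
  rw [dist_eq_norm, show x + ε • u - (x + u) = -((1 - ε) • u) by
    rw [sub_smul, one_smul]; abel] at hcontr
  rw [norm_neg, norm_smul, Real.norm_eq_abs, abs_of_pos (by linarith), huδ] at hcontr
  nlinarith

/-- Fundamental theorem of calculus bound along a segment. -/
private lemma ftc_bound {n k : ℕ} {Ω : Set (EuclideanSpace ℝ (Fin n))} (hΩ : IsOpen Ω)
    {V : EuclideanSpace ℝ (Fin n) → EuclideanSpace ℝ (Fin k)} (hV : ContDiffOn ℝ 1 V Ω)
    (x v : EuclideanSpace ℝ (Fin n)) (hseg : ∀ t ∈ Set.Icc (0:ℝ) 1, x + t • v ∈ Ω) :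
    ‖V (x + v) - V x‖ ≤ ∫ t in (0:ℝ)..1, ‖fderiv ℝ V (x + t • v) v‖ := by
  have hDV : ContinuousOn (fderiv ℝ V) Ω := hV.continuousOn_fderiv_of_isOpen hΩ le_rfl
  have hpath : Continuous (fun t : ℝ => x + t • v) :=
        continuous_const.add (continuous_id.smul continuous_const)
  have hc : ContinuousOn (fun t : ℝ => fderiv ℝ V (x + t • v) v) (Set.Icc 0 1) :=
    ((hDV.comp hpath.continuousOn (fun t ht => hseg t ht)).clm_apply continuousOn_const)
  have hft : ∀ t ∈ Set.Icc (0:ℝ) 1,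
      HasDerivAt (fun s : ℝ => V (x + s • v)) (fderiv ℝ V (x + t • v) v) t := by
    intro t ht
    have hdiff : DifferentiableAt ℝ V (x + t • v) :=
      (hV.differentiableOn one_ne_zero).differentiableAt (hΩ.mem_nhds (hseg t ht))
    have hp : HasDerivAt (fun s : ℝ => x + s • v) v t := by
      simpa using ((hasDerivAt_id t).smul_const v).const_add x
    exact (hdiff.hasFDerivAt.comp_hasDerivAt t hp)
  have hFTC := intervalIntegral.integral_eq_sub_of_hasDerivAt
    (fun t ht => hft t (by rwa [Set.uIcc_of_le zero_le_one] at ht))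
    (hc.intervalIntegrable_of_Icc zero_le_one)
  have : V (x + v) - V x = ∫ t in (0:ℝ)..1, fderiv ℝ V (x + t • v) v := by
    rw [hFTC]; norm_num
  rw [this]
  exact intervalIntegral.norm_integral_le_integral_norm zero_le_one

set_option maxHeartbeats 1000000 in
theorem fractional_differentiability (n : ℕ) (hn : 1 ≤ n) :
    ∃ C > 0, ∀ k : ℕ, 1 ≤ k → ∀ θ : ℝ, θ ∈ Set.Ioo (0 : ℝ) 1 → ∀ M : ℝ, 0 < M →
      ∀ β : EuclideanSpace ℝ (Fin k) → EuclideanSpace ℝ (Fin k),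
        (∀ w v : EuclideanSpace ℝ (Fin k), ‖β w - β v‖ ≤ M * ‖w - v‖ ^ θ) →
      ∀ Ω Ω' : Set (EuclideanSpace ℝ (Fin n)), IsOpen Ω → IsOpen Ω' →
        IsCompact (closure Ω') → closure Ω' ⊆ Ω →
      ∀ δ : ℝ, δ = sInf (Set.image2 dist Ω' (frontier Ω)) → 0 < δ →
      ∀ V : EuclideanSpace ℝ (Fin n) → EuclideanSpace ℝ (Fin k),
        ContDiffOn ℝ 1 V Ω →
      ∀ K : ℝ, 0 < K →
        IntegrableOn (fun x => ∑ i, ‖fderiv ℝ V x (EuclideanSpace.single i 1)‖ ^ 2) Ω →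
        (∫ x in Ω, ∑ i, ‖fderiv ℝ V x (EuclideanSpace.single i 1)‖ ^ 2) ≤ K ^ 2 →
      ∀ v : EuclideanSpace ℝ (Fin n), 0 < ‖v‖ → ‖v‖ ≤ δ →
        (∫ x in Ω', ‖β (V (x + v)) - β (V x)‖ ^ (2 / θ)) ≤
          C * M ^ (2 / θ) * K ^ 2 * ‖v‖ ^ 2 := by
  refine ⟨1, one_pos, ?_⟩
  intro k hk θ hθ M hM β hβ Ω Ω' hΩ hΩ' hcpt hclsub δ hδ hδpos V hV K hK hSint hK2 v hv hvδ
  obtain ⟨hθ0, hθ1⟩ := hθ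
  have hsub : Ω' ⊆ Ω := fun x hx => hclsub (subset_closure hx)
  -- the distance lower bound
  have hbdd : BddBelow (Set.image2 dist Ω' (frontier Ω)) := by
    refine ⟨0, ?_⟩
    rintro d ⟨a, ha, b, hb, rfl⟩
    exact dist_nonneg
  have hlow : ∀ x ∈ Ω', ∀ y ∈ frontier Ω, δ ≤ dist x y := by
    intro x hx y hy
    rw [hδ]
    exact csInf_le hbdd (Set.mem_image2_of_mem hx hy)
  -- geometric fact
  have hgeo : ∀ x ∈ Ω', ∀ u : EuclideanSpace ℝ (Fin n), ‖u‖ ≤ δ → x + u ∈ Ω :=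
    fun x hx u hu => geom_lemma hΩ hΩ' hsub hδpos hlow hx hu
  have htv : ∀ t ∈ Set.Icc (0:ℝ) 1, ‖t • v‖ ≤ δ := by
    intro t ht
    rw [norm_smul, Real.norm_eq_abs, abs_of_nonneg ht.1]
    nlinarith [ht.2, hv.le]
  -- notation
  set S : EuclideanSpace ℝ (Fin n) → ℝ :=
    fun y => ∑ i, ‖fderiv ℝ V y (EuclideanSpace.single i 1)‖ ^ 2 with hSdef
  have hSnn : ∀ y, 0 ≤ S y := fun y => Finset.sum_nonneg (fun i _ => sq_nonneg _)
  have hDV : ContinuousOn (fderiv ℝ V) Ω := hV.continuousOn_fderiv_of_isOpen hΩ le_rfl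
  have hScont : ContinuousOn S Ω := by
    apply continuousOn_finset_sum
    intro i _
    exact ((hDV.clm_apply continuousOn_const).norm).pow 2
  set c1 : ℝ≥0∞ := ENNReal.ofReal (M ^ (2/θ)) with hc1
  set c2 : ℝ≥0∞ := ENNReal.ofReal (‖v‖ ^ 2) with hc2
  set c3 : ℝ≥0∞ := ENNReal.ofReal (K ^ 2) with hc3
  set g : EuclideanSpace ℝ (Fin n) → ℝ≥0∞ :=
    fun x => ∫⁻ t in Set.Ioc (0:ℝ) 1, ENNReal.ofReal (S (x + t • v)) with hg
  -- β is continuous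
  have hβc : Continuous β := by
    refine continuous_iff_continuousAt.2 (fun w => ?_)
    rw [ContinuousAt, tendsto_iff_dist_tendsto_zero]
    have hle : ∀ y, dist (β y) (β w) ≤ M * dist y w ^ θ := by
      intro y
      rw [dist_eq_norm, dist_eq_norm]
      exact hβ y w
    have htend : Filter.Tendsto (fun y => M * dist y w ^ θ) (nhds w) (nhds 0) := by
      have h1 : Filter.Tendsto (fun y => dist y w) (nhds w) (nhds 0) := by
        have h := ((continuous_id.dist
          (continuous_const : Continuous fun _ : EuclideanSpace ℝ (Fin k) => w))).tendsto w
        simpa [dist_self] using h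
      have h2 : Filter.Tendsto (fun s : ℝ => M * s ^ θ) (nhds 0) (nhds 0) := by
        have := (Real.continuousAt_rpow_const 0 θ (Or.inr hθ0.le)).tendsto
        rw [Real.zero_rpow (ne_of_gt hθ0)] at this
        simpa using (this.const_mul M)
      exact h2.comp h1
    exact squeeze_zero (fun y => dist_nonneg) hle htend
  -- Main pointwise claim on Ω'
  have claimA : ∀ x ∈ Ω',
      ENNReal.ofReal (‖β (V (x + v)) - β (V x)‖ ^ (2/θ)) ≤ c1 * (c2 * g x) := by
    intro x hx
    have hseg : ∀ t ∈ Set.Icc (0:ℝ) 1, x + t • v ∈ Ω :=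
      fun t ht => hgeo x hx _ (htv t ht)
    set I : ℝ := ∫ t in (0:ℝ)..1, ‖fderiv ℝ V (x + t • v) v‖ with hI
    have hΔ : ‖V (x + v) - V x‖ ≤ I := ftc_bound hΩ hV x v hseg
    have hInn : 0 ≤ I := le_trans (norm_nonneg _) hΔ
    have hxnn : (0:ℝ) ≤ ‖V (x + v) - V x‖ := norm_nonneg _
    -- real inequality
    have hreal : ‖β (V (x + v)) - β (V x)‖ ^ (2/θ) ≤ M ^ (2/θ) * I ^ 2 := by
      have h1 : ‖β (V (x + v)) - β (V x)‖ ^ (2/θ) ≤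
          (M * ‖V (x + v) - V x‖ ^ θ) ^ (2/θ) :=
        Real.rpow_le_rpow (norm_nonneg _) (hβ _ _) (by positivity)
      have h2 : (M * ‖V (x + v) - V x‖ ^ θ) ^ (2/θ) =
          M ^ (2/θ) * ‖V (x + v) - V x‖ ^ (2:ℕ) := by
        rw [Real.mul_rpow hM.le (Real.rpow_nonneg hxnn _), ← Real.rpow_mul hxnn,
          show θ * (2/θ) = ((2:ℕ):ℝ) by field_simp; norm_num, Real.rpow_natCast]
      have h3 : ‖V (x + v) - V x‖ ^ (2:ℕ) ≤ I ^ (2:ℕ) := pow_le_pow_left₀ hxnn hΔ 2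
      calc ‖β (V (x + v)) - β (V x)‖ ^ (2/θ) ≤ M ^ (2/θ) * ‖V (x + v) - V x‖ ^ (2:ℕ) :=
            h1.trans_eq h2
        _ ≤ M ^ (2/θ) * I ^ 2 :=
            mul_le_mul_of_nonneg_left h3 (Real.rpow_nonneg hM.le _)
    -- pass to lintegrals
    have hDVc : ContinuousOn (fun t : ℝ => ‖fderiv ℝ V (x + t • v) v‖) (Set.Icc 0 1) := by
      have hpath : Continuous (fun t : ℝ => x + t • v) :=
        continuous_const.add (continuous_id.smul continuous_const)
      exact ((hDV.comp hpath.continuousOn (fun t ht => hseg t ht)).clm_apply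
        continuousOn_const).norm
    have hIeq : ENNReal.ofReal I =
        ∫⁻ t in Set.Ioc (0:ℝ) 1, ENNReal.ofReal ‖fderiv ℝ V (x + t • v) v‖ := by
      rw [hI, intervalIntegral.integral_of_le zero_le_one]
      exact ofReal_integral_eq_lintegral_ofReal
        ((hDVc.integrableOn_Icc).mono_set Set.Ioc_subset_Icc_self)
        (Filter.Eventually.of_forall (fun t => norm_nonneg _))
    have hmass : (volume.restrict (Set.Ioc (0:ℝ) 1)) Set.univ = 1 := by
      rw [Measure.restrict_apply_univ, Real.volume_Ioc]
      norm_num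
    have hFmeas : AEMeasurable (fun t : ℝ => ENNReal.ofReal ‖fderiv ℝ V (x + t • v) v‖)
        (volume.restrict (Set.Ioc (0:ℝ) 1)) :=
      ((hDVc.mono Set.Ioc_subset_Icc_self).aemeasurable measurableSet_Ioc).ennreal_ofReal
    have hCS : (ENNReal.ofReal I) ^ 2 ≤
        ∫⁻ t in Set.Ioc (0:ℝ) 1, (ENNReal.ofReal ‖fderiv ℝ V (x + t • v) v‖) ^ 2 := by
      rw [hIeq]
      exact sq_lintegral_le _ hmass _ hFmeas
    have hptw : ∀ t : ℝ, (ENNReal.ofReal ‖fderiv ℝ V (x + t • v) v‖) ^ 2 ≤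
        c2 * ENNReal.ofReal (S (x + t • v)) := by
      intro t
      have hb : ‖fderiv ℝ V (x + t • v) v‖ ^ 2 ≤ ‖v‖ ^ 2 * S (x + t • v) := by
        have h := hs_bound (fderiv ℝ V (x + t • v)) v
        have hs : Real.sqrt (S (x + t • v)) ^ 2 = S (x + t • v) :=
          Real.sq_sqrt (hSnn _)
        nlinarith [Real.sqrt_nonneg (S (x + t • v)), norm_nonneg v,
          norm_nonneg (fderiv ℝ V (x + t • v) v)]
      calc (ENNReal.ofReal ‖fderiv ℝ V (x + t • v) v‖) ^ 2
          = ENNReal.ofReal (‖fderiv ℝ V (x + t • v) v‖ ^ 2) :=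
            (ENNReal.ofReal_pow (norm_nonneg _) 2).symm
        _ ≤ ENNReal.ofReal (‖v‖ ^ 2 * S (x + t • v)) := ENNReal.ofReal_le_ofReal hb
        _ = c2 * ENNReal.ofReal (S (x + t • v)) := ENNReal.ofReal_mul (by positivity)
    calc ENNReal.ofReal (‖β (V (x + v)) - β (V x)‖ ^ (2/θ))
        ≤ ENNReal.ofReal (M ^ (2/θ) * I ^ 2) := ENNReal.ofReal_le_ofReal hreal
      _ = c1 * (ENNReal.ofReal I) ^ 2 := by
          rw [ENNReal.ofReal_mul (Real.rpow_nonneg hM.le _), ENNReal.ofReal_pow hInn]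
      _ ≤ c1 * ∫⁻ t in Set.Ioc (0:ℝ) 1, (ENNReal.ofReal ‖fderiv ℝ V (x + t • v) v‖) ^ 2 :=
          mul_le_mul_right hCS _
      _ ≤ c1 * ∫⁻ t in Set.Ioc (0:ℝ) 1, c2 * ENNReal.ofReal (S (x + t • v)) :=
          mul_le_mul_right (lintegral_mono (fun t => hptw t)) _
      _ = c1 * (c2 * g x) := by
          rw [lintegral_const_mul' c2 _ ENNReal.ofReal_ne_top]
  -- per-slice translation bound
  have htrans : ∀ t ∈ Set.Ioc (0:ℝ) 1,
      (∫⁻ x in Ω', ENNReal.ofReal (S (x + t • v))) ≤ c3 := by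
    intro t ht
    have hc : Ω' ⊆ (fun x => x + t • v) ⁻¹' Ω :=
      fun x hx => hgeo x hx _ (htv t ⟨ht.1.le, ht.2⟩)
    calc (∫⁻ x in Ω', ENNReal.ofReal (S (x + t • v)))
        ≤ ∫⁻ x in (fun x => x + t • v) ⁻¹' Ω, ENNReal.ofReal (S (x + t • v)) :=
          lintegral_mono_set hc
      _ = ∫⁻ y in Ω, ENNReal.ofReal (S y) :=
          (measurePreserving_add_right volume (t • v)).setLIntegral_comp_preimage_emb
            (MeasurableEquiv.addRight (t • v)).measurableEmbedding (fun y => ENNReal.ofReal (S y)) Ω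
      _ = ENNReal.ofReal (∫ y in Ω, S y) :=
          (ofReal_integral_eq_lintegral_ofReal hSint
            (Filter.Eventually.of_forall (fun y => hSnn y))).symm
      _ ≤ c3 := ENNReal.ofReal_le_ofReal hK2
  -- measurability of the integrand
  have hVcont : ContinuousOn V Ω := hV.continuousOn
  have hfall : ∀ x, 0 ≤ ‖β (V (x + v)) - β (V x)‖ ^ (2/θ) :=
    fun x => Real.rpow_nonneg (norm_nonneg _) _
  have hfm : AEStronglyMeasurable (fun x => ‖β (V (x + v)) - β (V x)‖ ^ (2/θ))
      (volume.restrict Ω') := by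
    have h1 : ContinuousOn (fun x => V (x + v)) Ω' :=
      hVcont.comp (continuous_id.add continuous_const).continuousOn
        (fun x hx => hgeo x hx v hvδ)
    have h2 : ContinuousOn V Ω' := hVcont.mono hsub
    have h3 : ContinuousOn (fun x => ‖β (V (x + v)) - β (V x)‖) Ω' :=
      ((hβc.comp_continuousOn h1).sub (hβc.comp_continuousOn h2)).norm
    exact (h3.rpow_const (fun x hx => Or.inr (by positivity))).aestronglyMeasurable
      hΩ'.measurableSet
  rw [integral_eq_lintegral_of_nonneg_ae (Filter.Eventually.of_forall hfall) hfm]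
  apply ENNReal.toReal_le_of_le_ofReal (by positivity)
  have hc12top : c1 * c2 ≠ ⊤ := ENNReal.mul_ne_top ENNReal.ofReal_ne_top ENNReal.ofReal_ne_top
  have hswap : (∫⁻ x in Ω', g x) =
      ∫⁻ t in Set.Ioc (0:ℝ) 1, ∫⁻ x in Ω', ENNReal.ofReal (S (x + t • v)) := by
    have hmeas : AEMeasurable (Function.uncurry fun x t => ENNReal.ofReal (S (x + t • v)))
        ((volume.restrict Ω').prod (volume.restrict (Set.Ioc (0:ℝ) 1))) := by
      rw [Measure.prod_restrict]
      have hmap : Continuous (fun p : EuclideanSpace ℝ (Fin n) × ℝ => p.1 + p.2 • v) :=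
        continuous_fst.add (continuous_snd.smul continuous_const)
      have hmapsto : Set.MapsTo (fun p : EuclideanSpace ℝ (Fin n) × ℝ => p.1 + p.2 • v)
          (Ω' ×ˢ Set.Ioc (0:ℝ) 1) Ω := by
        rintro ⟨x, t⟩ ⟨hx, ht⟩
        exact hgeo x hx _ (htv t ⟨ht.1.le, ht.2⟩)
      have hcont : ContinuousOn (Function.uncurry fun x t => ENNReal.ofReal (S (x + t • v)))
          (Ω' ×ˢ Set.Ioc (0:ℝ) 1) :=
        ENNReal.continuous_ofReal.comp_continuousOn
          (hScont.comp hmap.continuousOn hmapsto)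
      exact hcont.aemeasurable (hΩ'.measurableSet.prod measurableSet_Ioc)
    exact lintegral_lintegral_swap hmeas
  calc (∫⁻ x in Ω', ENNReal.ofReal (‖β (V (x + v)) - β (V x)‖ ^ (2/θ)))
      ≤ ∫⁻ x in Ω', c1 * (c2 * g x) :=
        lintegral_mono_ae ((ae_restrict_iff' hΩ'.measurableSet).2
          (Filter.Eventually.of_forall claimA))
    _ = (c1 * c2) * ∫⁻ x in Ω', g x := by
        simp_rw [← mul_assoc]
        exact lintegral_const_mul' _ _ hc12top
    _ = (c1 * c2) * ∫⁻ t in Set.Ioc (0:ℝ) 1, ∫⁻ x in Ω', ENNReal.ofReal (S (x + t • v)) := by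
        rw [hswap]
    _ ≤ (c1 * c2) * ∫⁻ t in Set.Ioc (0:ℝ) 1, c3 :=
        mul_le_mul_right (lintegral_mono_ae ((ae_restrict_iff' measurableSet_Ioc).2
          (Filter.Eventually.of_forall htrans))) _
    _ = (c1 * c2) * c3 := by
        rw [lintegral_const, Measure.restrict_apply_univ, Real.volume_Ioc]
        norm_num
    _ ≤ ENNReal.ofReal (1 * M ^ (2/θ) * K ^ 2 * ‖v‖ ^ 2) := by
        rw [hc1, hc2, hc3, ← ENNReal.ofReal_mul (Real.rpow_nonneg hM.le _),
          ← ENNReal.ofReal_mul (by positivity)]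
        exact ENNReal.ofReal_le_ofReal (le_of_eq (by ring))
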